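/- Convolution-decimation commutation for band-limited filters (core of Proposition 2): let f, g : ℤ → ℂ be absolutely summable with DTFTs f̂, ĝ, and suppose both f̂ and ĝ vanish outside [π(m−1)/D, π(m+1)/D) (mod 2π). Define ḡ(n) = D·g(Dn). Then for every y : ℤ → ℂ absolutely summable, ((y ⋆ g) ⋆ f)(Dn) decimated by D equals ḡ convolved with the D-fold decimation of (y ⋆ f): Σ_k ḡ(n−k) (y ⋆ f)(Dk) = ((y ⋆ g ⋆ f))(Dn) for all n ∈ ℤ. -/

import Mathlib

open Complex Real

/-- Discrete convolution. -/
noncomputable def dconv (a b : ℤ → ℂ) (n : ℤ) : ℂ :=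
  ∑' k : ℤ, a k * b (n - k)

/-- Discrete-time Fourier transform of a sequence. -/
noncomputable def dtft (x : ℤ → ℂ) (ω : ℝ) : ℂ :=
  ∑' l : ℤ, x l * Complex.exp (-Complex.I * ω * l)


section Helpers
open MeasureTheory

lemma norm_exp_I_mul (t : ℝ) : ‖Complex.exp (Complex.I * t)‖ = 1 := by
  rw [show (Complex.I * t : ℂ) = (t:ℝ) * Complex.I by ring]
  simp [Complex.norm_exp_ofReal_mul_I]

lemma norm_neg_exp_I_mul (ω : ℝ) (l : ℤ) : ‖Complex.exp (-Complex.I * ω * l)‖ = 1 := by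
  rw [show (-Complex.I * ω * l : ℂ) = Complex.I * ((-(ω * l) : ℝ) : ℂ) by push_cast; ring]
  exact norm_exp_I_mul _

lemma summable_norm_mul_shift (a b : ℤ → ℂ) (ha : Summable fun l => ‖a l‖)
    (hb : Summable fun l => ‖b l‖) (c : ℤ) :
    Summable fun j => ‖a j‖ * ‖b (c - j)‖ := by
  refine Summable.of_nonneg_of_le (fun j => by positivity) (fun j => ?_) (ha.mul_right (∑' l, ‖b l‖))
  exact mul_le_mul_of_nonneg_left (hb.le_tsum (c - j) (fun _ _ => norm_nonneg _)) (norm_nonneg _)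

lemma summable_dconv_term (a b : ℤ → ℂ) (ha : Summable fun l => ‖a l‖)
    (hb : Summable fun l => ‖b l‖) (c : ℤ) :
    Summable fun j => a j * b (c - j) := by
  refine Summable.of_norm ?_
  simpa [norm_mul] using summable_norm_mul_shift a b ha hb c

lemma summable_shift_prod (a b : ℤ → ℂ) (ha : Summable fun l => ‖a l‖)
    (hb : Summable fun l => ‖b l‖) :
    Summable (fun p : ℤ × ℤ => ‖a p.1‖ * ‖b (p.2 - p.1)‖) := by
  have base : Summable fun p : ℤ × ℤ => ‖a p.1‖ * ‖b p.2‖ :=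
    ha.mul_of_nonneg hb (fun _ => norm_nonneg _) (fun _ => norm_nonneg _)
  exact (Equiv.summable_iff (f := fun p : ℤ × ℤ => ‖a p.1‖ * ‖b p.2‖)
    ⟨fun p => (p.1, p.2 - p.1), fun p => (p.1, p.2 + p.1),
      fun p => by simp, fun p => by simp⟩).mpr base

lemma summable_norm_dconv (a b : ℤ → ℂ) (ha : Summable fun l => ‖a l‖)
    (hb : Summable fun l => ‖b l‖) :
    Summable fun n => ‖dconv a b n‖ := by
  have hprod := (summable_shift_prod a b ha hb).prod_symm
  have hU : Summable fun n : ℤ => ∑' k : ℤ, ‖a k‖ * ‖b (n - k)‖ := by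
    have := (summable_prod_of_nonneg
      (f := fun p : ℤ × ℤ => ‖a p.2‖ * ‖b (p.1 - p.2)‖)
      (fun p => by positivity)).mp hprod
    exact this.2
  refine Summable.of_nonneg_of_le (fun n => norm_nonneg _) (fun n => ?_) hU
  calc ‖dconv a b n‖ ≤ ∑' k, ‖a k * b (n - k)‖ :=
        norm_tsum_le_tsum_norm (by simpa [norm_mul] using summable_norm_mul_shift a b ha hb n)
    _ = ∑' k, ‖a k‖ * ‖b (n - k)‖ := by simp [norm_mul]

lemma dtft_dconv (a b : ℤ → ℂ) (ha : Summable fun l => ‖a l‖)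
    (hb : Summable fun l => ‖b l‖) (ω : ℝ) :
    dtft (dconv a b) ω = dtft a ω * dtft b ω := by
  have huncurry : Summable (Function.uncurry fun k n : ℤ =>
      a k * b (n - k) * Complex.exp (-Complex.I * ω * n)) := by
    refine Summable.of_norm ?_
    have h := summable_shift_prod a b ha hb
    refine h.congr fun p => ?_
    simp only [Function.uncurry, norm_mul, norm_neg_exp_I_mul, mul_one]
  have key : ∀ k : ℤ, (∑' n : ℤ, a k * b (n - k) * Complex.exp (-Complex.I * ω * n))
      = (a k * Complex.exp (-Complex.I * ω * k)) * dtft b ω := by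
    intro k
    rw [← Equiv.tsum_eq (Equiv.addRight k)
      (fun n : ℤ => a k * b (n - k) * Complex.exp (-Complex.I * ω * n))]
    have : ∀ j : ℤ, a k * b (j + k - k) * Complex.exp (-Complex.I * ω * ((j + k : ℤ) : ℂ))
        = (a k * Complex.exp (-Complex.I * ω * k)) * (b j * Complex.exp (-Complex.I * ω * j)) := by
      intro j
      rw [add_sub_cancel_right,
        show (-Complex.I * ω * ((j + k : ℤ) : ℂ)) = (-Complex.I * ω * j) + (-Complex.I * ω * k) by
          push_cast; ring,
        Complex.exp_add]
      ring
    calc (∑' j : ℤ, a k * b (j + k - k) * Complex.exp (-Complex.I * ω * ((j + k : ℤ) : ℂ)))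
        = ∑' j : ℤ, (a k * Complex.exp (-Complex.I * ω * k)) *
            (b j * Complex.exp (-Complex.I * ω * j)) := by
          exact tsum_congr fun j => this j
      _ = (a k * Complex.exp (-Complex.I * ω * k)) * dtft b ω := by
          rw [tsum_mul_left]; rfl
  calc dtft (dconv a b) ω
      = ∑' n : ℤ, ∑' k : ℤ, a k * b (n - k) * Complex.exp (-Complex.I * ω * n) := by
        refine tsum_congr fun n => ?_
        rw [dconv, ← tsum_mul_right]
    _ = ∑' k : ℤ, ∑' n : ℤ, a k * b (n - k) * Complex.exp (-Complex.I * ω * n) :=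
        huncurry.tsum_comm
    _ = ∑' k : ℤ, (a k * Complex.exp (-Complex.I * ω * k)) * dtft b ω :=
        tsum_congr key
    _ = dtft a ω * dtft b ω := by rw [tsum_mul_right]; rfl

lemma exp_integral_int (κ : ℤ) :
    (∫ ω in (-π)..π, Complex.exp (Complex.I * κ * ω)) =
      if κ = 0 then (2 * π : ℂ) else 0 := by
  rcases eq_or_ne κ 0 with hκ | hκ
  · subst hκ
    simp only [Int.cast_zero, mul_zero, zero_mul, Complex.exp_zero, if_pos rfl]
    rw [intervalIntegral.integral_const]
    norm_num [Complex.real_smul]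
    push_cast
    ring
  · rw [if_neg hκ]
    have hc : (Complex.I * κ : ℂ) ≠ 0 := by
      simp [Complex.I_ne_zero, Int.cast_ne_zero, hκ]
    rw [integral_exp_mul_complex hc]
    have h1 : Complex.exp (Complex.I * κ * (π : ℝ)) = Complex.cos (κ * π) := by
      rw [show (Complex.I * κ * (π : ℝ) : ℂ) = ((κ : ℂ) * π) * Complex.I by push_cast; ring,
        Complex.exp_mul_I, Complex.sin_int_mul_pi, zero_mul, add_zero]
    have h2 : Complex.exp (Complex.I * κ * ((-π : ℝ) : ℂ)) = Complex.cos (κ * π) := by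
      rw [show (Complex.I * κ * ((-π : ℝ) : ℂ) : ℂ) = (-((κ : ℂ) * π)) * Complex.I by
          push_cast; ring,
        Complex.exp_mul_I, Complex.sin_neg, Complex.cos_neg, Complex.sin_int_mul_pi, neg_zero,
        zero_mul, add_zero]
    rw [h1, h2, sub_self, zero_div]


lemma dtft_zero_of_zero (x : ℤ → ℂ) (hx : Summable fun l => ‖x l‖)
    (h0 : ∀ ω : ℝ, dtft x ω = 0) : ∀ c : ℤ, x c = 0 := by
  intro c
  set F : ℤ → ℝ → ℂ := fun l ω => x l * Complex.exp (Complex.I * ((c - l : ℤ) : ℂ) * ω) with hF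
  have hnormF : ∀ l (ω : ℝ), ‖F l ω‖ = ‖x l‖ := by
    intro l ω
    rw [hF]
    simp only [norm_mul]
    have hre : (Complex.I * ((c - l : ℤ) : ℂ) * (ω : ℝ)).re = 0 := by
      simp [Complex.mul_re]
    rw [show ‖Complex.exp (Complex.I * ((c - l : ℤ) : ℂ) * (ω : ℝ))‖ = 1 from by
      rw [Complex.norm_exp, hre, Real.exp_zero]]
    ring
  have hcont : ∀ l : ℤ, Continuous (F l) := by
    intro l
    exact continuous_const.mul (Complex.continuous_exp.comp
      (continuous_const.mul Complex.continuous_ofReal))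
  have hint : ∀ l : ℤ, Integrable (F l) (volume.restrict (Set.Ioc (-π) π)) := by
    intro l
    exact (hcont l).integrableOn_Ioc
  have hnormint : ∀ l : ℤ, (∫ ω in Set.Ioc (-π) π, ‖F l ω‖) = (2 * π) * ‖x l‖ := by
    intro l
    simp only [hnormF]
    rw [setIntegral_const, Real.volume_real_Ioc, max_eq_left (by linarith [pi_pos])]
    rw [smul_eq_mul]; ring
  have hsumint : Summable fun l : ℤ => ∫ ω in Set.Ioc (-π) π, ‖F l ω‖ := by
    simp only [hnormint]
    exact hx.mul_left _
  have swap := integral_tsum_of_summable_integral_norm (μ := volume.restrict (Set.Ioc (-π) π))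
    hint hsumint
  have hpt : ∀ ω : ℝ, (∑' l : ℤ, F l ω) = dtft x ω * Complex.exp (Complex.I * ω * c) := by
    intro ω
    rw [dtft, ← tsum_mul_right]
    refine tsum_congr fun l => ?_
    rw [hF]
    simp only
    rw [show (Complex.I * ((c - l : ℤ) : ℂ) * (ω : ℝ) : ℂ)
        = (-Complex.I * ω * l) + (Complex.I * ω * c) by push_cast; ring, Complex.exp_add]
    ring
  have hzero : (∫ ω in Set.Ioc (-π) π, ∑' l : ℤ, F l ω) = 0 := by
    have : (fun ω : ℝ => ∑' l : ℤ, F l ω) = fun ω => 0 := by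
      funext ω; rw [hpt ω, h0 ω, zero_mul]
    rw [this, integral_zero]
  have hval : ∀ l : ℤ, (∫ ω in Set.Ioc (-π) π, F l ω) = x l * (if l = c then (2*π : ℂ) else 0) := by
    intro l
    rw [hF]
    simp only
    rw [MeasureTheory.integral_const_mul, ← intervalIntegral.integral_of_le (by linarith [pi_pos] : -π ≤ π),
      exp_integral_int (c - l)]
    congr 1
    by_cases h : l = c
    · rw [if_pos (by omega), if_pos h]
    · rw [if_neg (by omega), if_neg h]
  have : (∑' l : ℤ, (∫ ω in Set.Ioc (-π) π, F l ω)) = x c * (2*π : ℂ) := by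
    rw [tsum_eq_single c]
    · rw [hval c, if_pos rfl]
    · intro l hl
      rw [hval l, if_neg hl, mul_zero]
  rw [swap, hzero] at this
  have h2π : (2 * π : ℂ) ≠ 0 := by
    simp only [ne_eq, mul_eq_zero, not_or]
    constructor
    · norm_num
    · exact_mod_cast Real.pi_ne_zero
  field_simp at this
  simpa [Real.pi_ne_zero] using this.symm

lemma sum_roots_of_unity (D : ℕ) (hD : 0 < D) (j : ℤ) :
    (∑ r ∈ Finset.range D, Complex.exp (Complex.I * ((2*π*r/D : ℝ) : ℂ) * j)) =
      if (D:ℤ) ∣ j then (D:ℂ) else 0 := by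
  have hD0 : (D : ℂ) ≠ 0 := by exact_mod_cast hD.ne'
  set z : ℂ := Complex.exp (Complex.I * ((2*π/D : ℝ) : ℂ) * j) with hz
  have hterm : ∀ r ∈ Finset.range D,
      Complex.exp (Complex.I * ((2*π*r/D : ℝ) : ℂ) * j) = z ^ r := by
    intro r _
    rw [hz, ← Complex.exp_nat_mul]
    congr 1
    push_cast
    ring
  rw [Finset.sum_congr rfl hterm]
  by_cases hdvd : (D:ℤ) ∣ j
  · rw [if_pos hdvd]
    obtain ⟨u, rfl⟩ := hdvd
    have hz1 : z = 1 := by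
      rw [hz, show (Complex.I * ((2*π/D : ℝ) : ℂ) * ((D * u : ℤ) : ℂ))
          = (u : ℂ) * (2 * π * Complex.I) by push_cast; field_simp]
      exact Complex.exp_int_mul_two_pi_mul_I u
    simp [hz1]
  · rw [if_neg hdvd]
    have hz1 : z ≠ 1 := by
      intro h
      obtain ⟨n, hn⟩ := Complex.exp_eq_one_iff.mp (hz ▸ h)
      have hπ : (π : ℂ) ≠ 0 := by exact_mod_cast Real.pi_ne_zero
      have hj : (j : ℂ) = (n : ℂ) * D := by
        have h2 : ((2*π/D : ℝ) : ℂ) = 2 * π / D := by push_cast; ring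
        rw [h2] at hn
        field_simp at hn
        have hI := Complex.I_ne_zero
        have h3 : (2 * (π:ℂ) * Complex.I) * (j:ℂ) = (2 * (π:ℂ) * Complex.I) * ((n:ℂ) * D) := by
          linear_combination (2 * (π:ℂ) * Complex.I) * hn
        exact mul_left_cancel₀ (by simp [hπ, hI] : (2 * (π:ℂ) * Complex.I) ≠ 0) h3
      have : j = n * D := by exact_mod_cast hj
      exact hdvd ⟨n, by linarith⟩
    rw [geom_sum_eq hz1]
    have hzD : z ^ D = 1 := by
      rw [hz, ← Complex.exp_nat_mul,
        show ((D:ℂ) * (Complex.I * ((2*π/D : ℝ) : ℂ) * j)) = (j:ℂ) * (2*π*Complex.I) by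
          push_cast; field_simp]
      exact Complex.exp_int_mul_two_pi_mul_I j
    rw [hzD, sub_self, zero_div]

lemma key_decimation (D : ℕ) (hD : 2 ≤ D) (m : ℤ) (f g : ℤ → ℂ)
    (hf : Summable fun l => ‖f l‖) (hg : Summable fun l => ‖g l‖)
    (hfband : ∀ ω : ℝ,
      (¬ ∃ k : ℤ, π * (m - 1) / D ≤ ω + 2 * π * k ∧ ω + 2 * π * k < π * (m + 1) / D) →
      dtft f ω = 0)
    (hgband : ∀ ω : ℝ,
      (¬ ∃ k : ℤ, π * (m - 1) / D ≤ ω + 2 * π * k ∧ ω + 2 * π * k < π * (m + 1) / D) →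
      dtft g ω = 0) (c : ℤ) :
    (∑' j : ℤ, g j * f (c - j)) = (D:ℂ) * ∑' u : ℤ, g ((D:ℤ) * u) * f (c - (D:ℤ) * u) := by
  have hπ := Real.pi_pos
  have hDR : (0:ℝ) < D := by positivity
  -- modulated convolutions vanish for r = 1, ..., D-1
  have hmod : ∀ r : ℕ, r ∈ Finset.range D → r ≠ 0 →
      (∑' j : ℤ, g j * Complex.exp (Complex.I * ((2*π*r/D : ℝ):ℂ) * j) * f (c - j)) = 0 := by
    intro r hr hr0
    have hrD : r < D := Finset.mem_range.mp hr
    set θ : ℝ := 2*π*r/D with hθ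
    set gm : ℤ → ℂ := fun j => g j * Complex.exp (Complex.I * (θ:ℝ) * j) with hgm
    have hexpnorm : ∀ j : ℤ, ‖Complex.exp (Complex.I * (θ:ℝ) * (j:ℂ))‖ = 1 := by
      intro j
      have hre : (Complex.I * (θ:ℝ) * (j:ℂ)).re = 0 := by simp [Complex.mul_re]
      rw [Complex.norm_exp, hre, Real.exp_zero]
    have hgmnorm : Summable fun j => ‖gm j‖ := by
      refine hg.congr fun j => ?_
      rw [hgm]; simp only [norm_mul, hexpnorm, mul_one]
    have hdtftgm : ∀ ω : ℝ, dtft gm ω = dtft g (ω - θ) := by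
      intro ω
      refine tsum_congr fun j => ?_
      rw [hgm]
      simp only
      rw [mul_assoc, ← Complex.exp_add]
      congr 2
      push_cast
      ring
    have hzero : ∀ ω : ℝ, dtft (dconv gm f) ω = 0 := by
      intro ω
      rw [dtft_dconv gm f hgmnorm hf ω, hdtftgm]
      rcases eq_or_ne (dtft f ω) 0 with h | h
      · rw [h, mul_zero]
      rcases eq_or_ne (dtft g (ω - θ)) 0 with h' | h'
      · rw [h', zero_mul]
      exfalso
      have hfe : ∃ k : ℤ, π * (m - 1) / D ≤ ω + 2 * π * k ∧ ω + 2 * π * k < π * (m + 1) / D := by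
        by_contra hc; exact h (hfband ω hc)
      have hge : ∃ k : ℤ, π * (m - 1) / D ≤ (ω - θ) + 2 * π * k ∧
          (ω - θ) + 2 * π * k < π * (m + 1) / D := by
        by_contra hc; exact h' (hgband (ω - θ) hc)
      obtain ⟨k, hA1, hA2⟩ := hfe
      obtain ⟨k', hB1, hB2⟩ := hge
      set t : ℤ := (r : ℤ) + D * (k - k') with ht
      have hteq : (ω + 2*π*k) - ((ω - θ) + 2*π*k') = 2*π*(t:ℝ)/D := by
        rw [hθ, ht]
        push_cast
        field_simp
        ring
      have hub : 2*π*(t:ℝ)/D < 2*π/D := by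
        have : (ω + 2*π*k) - ((ω - θ) + 2*π*k') < π * (m + 1) / D - π * (m - 1) / D := by
          linarith
        rw [hteq] at this
        have h2 : π * (m + 1) / D - π * (m - 1) / D = 2*π/D := by
          field_simp; ring
        linarith [h2 ▸ this]
      have hlb : -(2*π/D) < 2*π*(t:ℝ)/D := by
        have : ((ω - θ) + 2*π*k') - (ω + 2*π*k) < π * (m + 1) / D - π * (m - 1) / D := by
          linarith
        have h2 : π * (m + 1) / D - π * (m - 1) / D = 2*π/D := by
          field_simp; ring
        rw [h2] at this
        have := neg_lt_neg this
        rw [neg_sub] at this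
        linarith [hteq ▸ this]
      have h2π : (0:ℝ) < 2*π := by linarith
      have htR : |(t:ℝ)| < 1 := by
        rw [abs_lt]
        constructor
        · have hlb' : (-(2*π))/(D:ℝ) < 2*π*(t:ℝ)/(D:ℝ) := by rw [neg_div]; exact hlb
          have := (div_lt_div_iff_of_pos_right hDR).mp hlb'
          nlinarith
        · have := (div_lt_div_iff_of_pos_right hDR).mp hub
          nlinarith
      have htZ : t = 0 := by
        have h1 : |t| < 1 := by exact_mod_cast htR
        exact Int.abs_lt_one_iff.mp h1
      have h0 : (r:ℤ) + (D:ℤ)*(k-k') = 0 := ht ▸ htZ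
      have hreq : (r : ℤ) = D * (k' - k) := by linear_combination h0
      have hk1 : (1:ℤ) ≤ k' - k := by
        rcases lt_or_ge (k' - k) 1 with hlt | hle
        · exfalso
          have hr0' : (0:ℤ) < r := by exact_mod_cast Nat.pos_of_ne_zero hr0
          have hD0' : (0:ℤ) < D := by exact_mod_cast (by omega : 0 < D)
          nlinarith
        · exact hle
      have : (D:ℤ) ≤ r := by nlinarith [hreq, hk1, (by exact_mod_cast (by omega : 0 < D) : (0:ℤ) < D)]
      have : r < D := hrD
      omega
    have hzc := dtft_zero_of_zero (dconv gm f) (summable_norm_dconv gm f hgmnorm hf) hzero c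
    rw [dconv] at hzc
    exact hzc
  -- summability of each modulated series
  have hsum_r : ∀ r ∈ Finset.range D,
      Summable fun j : ℤ => g j * Complex.exp (Complex.I * ((2*π*r/D : ℝ):ℂ) * j) * f (c - j) := by
    intro r _
    refine Summable.of_norm ?_
    have hexpnorm : ∀ j : ℤ, ‖Complex.exp (Complex.I * ((2*π*r/D : ℝ):ℂ) * (j:ℂ))‖ = 1 := by
      intro j
      have hre : (Complex.I * ((2*π*r/D : ℝ):ℂ) * (j:ℂ)).re = 0 := by simp [Complex.mul_re]
      rw [Complex.norm_exp, hre, Real.exp_zero]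
    refine (summable_norm_mul_shift g f hg hf c).congr fun j => ?_
    rw [norm_mul, norm_mul, hexpnorm, mul_one]
  have hD0 : 0 < D := by omega
  calc (∑' j : ℤ, g j * f (c - j))
      = ∑ r ∈ Finset.range D,
          ∑' j : ℤ, g j * Complex.exp (Complex.I * ((2*π*r/D : ℝ):ℂ) * j) * f (c - j) := by
        rw [Finset.sum_eq_single_of_mem 0 (Finset.mem_range.mpr hD0) (fun r hr hr0 => hmod r hr hr0)]
        refine tsum_congr fun j => ?_
        norm_num
    _ = ∑' j : ℤ, ∑ r ∈ Finset.range D,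
          g j * Complex.exp (Complex.I * ((2*π*r/D : ℝ):ℂ) * j) * f (c - j) :=
        (Summable.tsum_finsetSum hsum_r).symm
    _ = ∑' j : ℤ, (g j * f (c - j)) * (if (D:ℤ) ∣ j then (D:ℂ) else 0) := by
        refine tsum_congr fun j => ?_
        rw [← sum_roots_of_unity D hD0 j, Finset.mul_sum]
        exact Finset.sum_congr rfl fun r _ => by ring
    _ = ∑' u : ℤ, (g ((D:ℤ)*u) * f (c - (D:ℤ)*u)) * (D:ℂ) := by
        rw [← Function.Injective.tsum_eq (g := fun u : ℤ => (D:ℤ)*u)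
          (f := fun j : ℤ => (g j * f (c - j)) * (if (D:ℤ) ∣ j then (D:ℂ) else 0))
          (mul_right_injective₀ (by exact_mod_cast hD0.ne' : (D:ℤ) ≠ 0))
          (fun j hj => ?_)]
        · refine tsum_congr fun u => ?_
          rw [if_pos ⟨u, rfl⟩]
        · by_contra hrange
          apply hj
          have hnd : ¬ (D:ℤ) ∣ j := by
            intro ⟨u, hu⟩
            exact hrange ⟨u, hu.symm⟩
          show (g j * f (c - j)) * (if (D:ℤ) ∣ j then (D:ℂ) else 0) = 0
          rw [if_neg hnd, mul_zero]
    _ = (D:ℂ) * ∑' u : ℤ, g ((D:ℤ) * u) * f (c - (D:ℤ) * u) := by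
        rw [tsum_mul_right, mul_comm]


end Helpers

open MeasureTheory in
theorem convolution_decimation_commutation (D : ℕ) (hD : 2 ≤ D) (m : ℤ)
    (f g y : ℤ → ℂ)
    (hf : Summable fun l => ‖f l‖) (hg : Summable fun l => ‖g l‖)
    (hy : Summable fun l => ‖y l‖)
    -- f̂ and ĝ vanish outside [π(m−1)/D, π(m+1)/D) modulo 2π
    (hfband : ∀ ω : ℝ,
      (¬ ∃ k : ℤ, π * (m - 1) / D ≤ ω + 2 * π * k ∧ ω + 2 * π * k < π * (m + 1) / D) →
      dtft f ω = 0)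
    (hgband : ∀ ω : ℝ,
      (¬ ∃ k : ℤ, π * (m - 1) / D ≤ ω + 2 * π * k ∧ ω + 2 * π * k < π * (m + 1) / D) →
      dtft g ω = 0) :
    ∀ n : ℤ,
      (∑' k : ℤ, ((D : ℂ) * g (D * (n - k))) * dconv y f (D * k))
        = dconv (dconv y g) f (D * n) := by
  intro n
  have hD0 : (D:ℤ) ≠ 0 := by positivity
  have hB : ∀ j : ℤ, ‖f j‖ ≤ ∑' l, ‖f l‖ := fun j => hf.le_tsum j (fun _ _ => norm_nonneg _)
  -- LHS
  have lhs_eq : (∑' k : ℤ, ((D : ℂ) * g (D * (n - k))) * dconv y f (D * k))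
      = ∑' l : ℤ, y l * ∑' j : ℤ, g j * f ((D * n - l) - j) := by
    have huncurry : Summable (Function.uncurry fun k l : ℤ =>
        ((D : ℂ) * g (D * (n - k))) * (y l * f (D * k - l))) := by
      refine Summable.of_norm ?_
      have hgk : Summable fun k : ℤ => (D:ℝ) * ‖g (D * (n - k))‖ := by
        refine Summable.mul_left _ ?_
        have hinj : Function.Injective (fun k : ℤ => (D:ℤ) * (n - k)) := by
          intro a b hab
          simp only at hab
          have := mul_left_cancel₀ hD0 hab
          omega
        exact Summable.comp_injective (f := fun l : ℤ => ‖g l‖) hg hinj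
      have hyB : Summable fun l : ℤ => ‖y l‖ * (∑' l', ‖f l'‖) := hy.mul_right _
      refine Summable.of_nonneg_of_le (fun p => norm_nonneg _) (fun p => ?_)
        (hgk.mul_of_nonneg hyB (fun k => mul_nonneg (Nat.cast_nonneg D) (norm_nonneg _)) (fun l => mul_nonneg (norm_nonneg _) (tsum_nonneg fun _ => norm_nonneg _)))
      simp only [Function.uncurry, norm_mul, Complex.norm_natCast]
      calc (D:ℝ) * ‖g (D * (n - p.1))‖ * (‖y p.2‖ * ‖f (D * p.1 - p.2)‖)
          ≤ (D:ℝ) * ‖g (D * (n - p.1))‖ * (‖y p.2‖ * ∑' l', ‖f l'‖) := by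
            refine mul_le_mul_of_nonneg_left ?_ (by positivity)
            exact mul_le_mul_of_nonneg_left (hB _) (norm_nonneg _)
        _ = (D:ℝ) * ‖g (D * (n - p.1))‖ * (‖y p.2‖ * ∑' l', ‖f l'‖) := rfl
    calc (∑' k : ℤ, ((D : ℂ) * g (D * (n - k))) * dconv y f (D * k))
        = ∑' k : ℤ, ∑' l : ℤ, ((D : ℂ) * g (D * (n - k))) * (y l * f (D * k - l)) := by
          refine tsum_congr fun k => ?_
          rw [dconv, ← tsum_mul_left]
      _ = ∑' l : ℤ, ∑' k : ℤ, ((D : ℂ) * g (D * (n - k))) * (y l * f (D * k - l)) :=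
          (huncurry.tsum_comm).symm
      _ = ∑' l : ℤ, y l * ∑' j : ℤ, g j * f ((D * n - l) - j) := by
          refine tsum_congr fun l => ?_
          have step1 : (∑' k : ℤ, ((D : ℂ) * g (D * (n - k))) * (y l * f (D * k - l)))
              = y l * ∑' k : ℤ, (D : ℂ) * (g (D * (n - k)) * f (D * k - l)) := by
            rw [← tsum_mul_left]
            exact tsum_congr fun k => by ring
          rw [step1]
          congr 1
          rw [tsum_mul_left]
          -- reindex k ↦ n - u
          rw [← Equiv.tsum_eq (Equiv.subLeft n)
            (fun k : ℤ => g (D * (n - k)) * f (D * k - l))]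
          have : ∀ u : ℤ, g (D * (n - (n - u))) * f (D * (n - u) - l)
              = g ((D:ℤ) * u) * f ((D * n - l) - (D:ℤ) * u) := by
            intro u
            congr 2 <;> ring
          rw [show (fun u : ℤ => g (D * (n - (Equiv.subLeft n) u)) * f (D * ((Equiv.subLeft n) u) - l))
              = fun u : ℤ => g ((D:ℤ) * u) * f ((D * n - l) - (D:ℤ) * u) from funext fun u => by
            simpa [Equiv.subLeft] using this u]
          exact (key_decimation D hD m f g hf hg hfband hgband (D * n - l)).symm
  -- RHS
  have rhs_eq : dconv (dconv y g) f (D * n)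
      = ∑' l : ℤ, y l * ∑' j : ℤ, g j * f ((D * n - l) - j) := by
    have huncurry : Summable (Function.uncurry fun l j : ℤ =>
        (y l * g (j - l)) * f (D * n - j)) := by
      refine Summable.of_norm ?_
      have base := (summable_shift_prod y g hy hg).mul_right (∑' l', ‖f l'‖)
      refine Summable.of_nonneg_of_le (fun p => norm_nonneg _) (fun p => ?_) base
      simp only [Function.uncurry, norm_mul]
      exact mul_le_mul_of_nonneg_left (hB _) (by positivity)
    calc dconv (dconv y g) f (D * n)
        = ∑' j : ℤ, ∑' l : ℤ, (y l * g (j - l)) * f (D * n - j) := by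
          simp only [dconv]
          exact tsum_congr fun j => (tsum_mul_right).symm
      _ = ∑' l : ℤ, ∑' j : ℤ, (y l * g (j - l)) * f (D * n - j) :=
          huncurry.tsum_comm
      _ = ∑' l : ℤ, y l * ∑' j : ℤ, g j * f ((D * n - l) - j) := by
          refine tsum_congr fun l => ?_
          rw [← tsum_mul_left]
          -- reindex j ↦ j + l
          rw [← Equiv.tsum_eq (Equiv.addRight l)
            (fun j : ℤ => (y l * g (j - l)) * f (D * n - j))]
          refine tsum_congr fun j => ?_
          simp only [Equiv.coe_addRight, add_sub_cancel_right]
          rw [show (D * n - (j + l) : ℤ) = (D * n - l) - j by ring]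
          ring
  rw [lhs_eq, rhs_eq]
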